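/- Let X be a compact convex subset of R^d with a norm ||.||, let g be continuously differentiable on a neighborhood of X, and let x* in X be a gamma-sharp local minimum of g, i.e. g(x) >= g(x*) + gamma * ||x - x*|| for some gamma > 0 and all x in X sufficiently close to x*. Then <grad g(x*), z> >= gamma * ||z|| for all z in the tangent cone TC(x*) to X at x*; in particular, grad g(x*) lies in the topological interior of the dual cone TC*(x*). -/

import Mathlib

open scoped RealInnerProductSpace

/-- The tangent cone to `X` at `p`: the closure of the set of all rays emanating from `p`
and intersecting `X`, i.e. the closure of `{t • (x - p) : x ∈ X, t ≥ 0}`. -/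
def polarTangentCone {d : ℕ} (X : Set (EuclideanSpace ℝ (Fin d)))
    (p : EuclideanSpace ℝ (Fin d)) : Set (EuclideanSpace ℝ (Fin d)) :=
  closure {z | ∃ x ∈ X, ∃ t : ℝ, 0 ≤ t ∧ z = t • (x - p)}

/-- If `x*` is a `γ`-sharp local minimum of `g` on the compact convex set `X`,
then `⟪∇g(x*), z⟫ ≥ γ‖z‖` for all `z` in the tangent cone `TC(x*)`; in particular,
`∇g(x*)` lies in the topological interior of the dual cone `TC*(x*)`. -/
theorem sharp_min_grad_bound_on_tangent_cone {d : ℕ}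
    (X : Set (EuclideanSpace ℝ (Fin d))) (hXcompact : IsCompact X) (hXconvex : Convex ℝ X)
    (g : EuclideanSpace ℝ (Fin d) → ℝ)
    (U : Set (EuclideanSpace ℝ (Fin d))) (hUopen : IsOpen U) (hXU : X ⊆ U)
    (hgC1 : ContDiffOn ℝ 1 g U)
    (xstar : EuclideanSpace ℝ (Fin d)) (hxstar : xstar ∈ X)
    (γ : ℝ) (hγ : 0 < γ)
    (hsharp : ∃ ε > 0, ∀ x ∈ X, ‖x - xstar‖ < ε → g xstar + γ * ‖x - xstar‖ ≤ g x) :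
    (∀ z ∈ polarTangentCone X xstar, γ * ‖z‖ ≤ ⟪gradient g xstar, z⟫) ∧
    gradient g xstar ∈
      interior {y : EuclideanSpace ℝ (Fin d) | ∀ z ∈ polarTangentCone X xstar, 0 ≤ ⟪y, z⟫} := by
  obtain ⟨ε, hε, hs⟩ := hsharp
  have hdiff : DifferentiableAt ℝ g xstar :=
    ((hgC1.differentiableOn one_ne_zero).differentiableAt (hUopen.mem_nhds (hXU hxstar)))
  set v0 := gradient g xstar with hv0
  have hgrad : HasGradientAt g v0 xstar := hdiff.hasGradientAt
  -- directional derivative inequality for x ∈ X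
  have key : ∀ x ∈ X, γ * ‖x - xstar‖ ≤ ⟪v0, x - xstar⟫ := by
    intro x hx
    set w : EuclideanSpace ℝ (Fin d) := x - xstar with hw
    have hline : HasDerivAt (fun s : ℝ => xstar + s • w) w 0 := by
      simpa using ((hasDerivAt_id (0:ℝ)).smul_const w).const_add xstar
    have hφ : HasDerivAt (fun s : ℝ => g (xstar + s • w)) ⟪v0, w⟫ 0 := by
      have hF : HasFDerivAt g (InnerProductSpace.toDual ℝ _ v0)
          ((fun s : ℝ => xstar + s • w) 0) := by
        simpa using hgrad.hasFDerivAt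
      have := hF.comp_hasDerivAt 0 hline
      exact this
    have htend : Filter.Tendsto (fun s : ℝ => (g (xstar + s • w) - g xstar) / s)
        (nhdsWithin 0 (Set.Ioi 0)) (nhds ⟪v0, w⟫) := by
      have h1 := hasDerivAt_iff_tendsto_slope.mp hφ
      have h2 : nhdsWithin (0:ℝ) (Set.Ioi 0) ≤ nhdsWithin (0:ℝ) {(0:ℝ)}ᶜ :=
        nhdsWithin_mono 0 (fun s hs => ne_of_gt hs)
      have := h1.mono_left h2
      refine this.congr' ?_
      filter_upwards [self_mem_nhdsWithin] with s hs
      simp [slope_def_field, div_eq_inv_mul]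
    set δ : ℝ := min 1 (ε / (‖w‖ + 1)) with hδ
    have hδpos : 0 < δ := lt_min one_pos (div_pos hε (by positivity))
    have hev : ∀ᶠ s in nhdsWithin (0:ℝ) (Set.Ioi 0),
        γ * ‖w‖ ≤ (g (xstar + s • w) - g xstar) / s := by
      filter_upwards [Ioo_mem_nhdsGT_of_mem (Set.mem_Ico.mpr ⟨le_rfl, hδpos⟩)] with s hs
      obtain ⟨hs0, hsδ⟩ := hs
      have hs1 : s ≤ 1 := le_of_lt (lt_of_lt_of_le hsδ (min_le_left _ _))
      have hmem : xstar + s • w ∈ X := by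
        have := hXconvex hxstar hx (a := 1 - s) (b := s) (by linarith) hs0.le (by ring)
        have heq : (1 - s) • xstar + s • x = xstar + s • w := by
          simp [hw, smul_sub]; module
        rwa [heq] at this
      have hnorm : ‖(xstar + s • w) - xstar‖ = s * ‖w‖ := by
        simp [norm_smul, abs_of_pos hs0]
      have hlt : ‖(xstar + s • w) - xstar‖ < ε := by
        rw [hnorm]
        have h2 : s < ε / (‖w‖ + 1) := lt_of_lt_of_le hsδ (min_le_right _ _)
        have h3 : ‖w‖ < ‖w‖ + 1 := by linarith
        calc s * ‖w‖ ≤ s * (‖w‖ + 1) := by nlinarith [norm_nonneg w]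
          _ < (ε / (‖w‖ + 1)) * (‖w‖ + 1) := by
              apply mul_lt_mul_of_pos_right h2 (by positivity)
          _ = ε := by field_simp
      have hge := hs _ hmem hlt
      rw [hnorm] at hge
      rw [le_div_iff₀ hs0]
      nlinarith
    simpa [hw] using ge_of_tendsto htend hev
  -- cone inequality
  have cone : ∀ z ∈ polarTangentCone X xstar, γ * ‖z‖ ≤ ⟪v0, z⟫ := by
    have hclosed : IsClosed {z : EuclideanSpace ℝ (Fin d) | γ * ‖z‖ ≤ ⟪v0, z⟫} :=
      isClosed_le (continuous_const.mul continuous_norm) (continuous_const.inner continuous_id)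
    intro z hz
    refine hclosed.closure_subset_iff.mpr ?_ hz
    rintro z ⟨x, hx, t, ht, rfl⟩
    have := key x hx
    have hn : ‖t • (x - xstar)‖ = t * ‖x - xstar‖ := by
      simp [norm_smul, abs_of_nonneg ht]
    rw [Set.mem_setOf_eq, hn, real_inner_smul_right]
    nlinarith
  refine ⟨cone, ?_⟩
  rw [mem_interior]
  refine ⟨Metric.ball v0 γ, ?_, Metric.isOpen_ball, Metric.mem_ball_self hγ⟩
  intro y hy z hz
  have h1 := cone z hz
  have h2 : ‖y - v0‖ < γ := by simpa [dist_eq_norm] using hy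
  have h3 : |⟪y - v0, z⟫| ≤ ‖y - v0‖ * ‖z‖ := abs_real_inner_le_norm _ _
  have h4 : ⟪y, z⟫ = ⟪y - v0, z⟫ + ⟪v0, z⟫ := by rw [← inner_add_left, sub_add_cancel]
  have h5 := neg_abs_le ⟪y - v0, z⟫
  nlinarith [norm_nonneg z, norm_nonneg (y - v0)]
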